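/- Let k ≤ n be positive integers and let G be a simple graph on vertex set {1,…,n} whose clique number satisfies ω(G) ≥ k. Then the maximum of Σ_{(i,j)∈E} P_{ii} P_{jj} over P ∈ Gr(k,n) equals k²(1 − 1/ω(G)), and this maximum is attained. -/

import Mathlib

open Matrix BigOperators

/-- The projection model of the Grassmannian `Gr(k,n)`: real symmetric idempotent
`n × n` matrices of trace `k`. -/
def Grassmannian (k n : ℕ) : Set (Matrix (Fin n) (Fin n) ℝ) :=
  {P | Pᵀ = P ∧ P * P = P ∧ P.trace = (k : ℝ)}


variable {n : ℕ}

private def qform (G : SimpleGraph (Fin n)) [DecidableRel G.Adj] (x y : Fin n → ℝ) : ℝ :=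
  ∑ i, ∑ j, if G.Adj i j then x i * y j else 0

section qf
variable (G : SimpleGraph (Fin n)) [DecidableRel G.Adj]

private lemma qform_comm (x y : Fin n → ℝ) : qform G x y = qform G y x := by
  unfold qform
  rw [Finset.sum_comm]
  exact Finset.sum_congr rfl fun j _ => Finset.sum_congr rfl fun i _ =>
    if_congr (G.adj_comm i j) (mul_comm (x i) (y j)) rfl

private lemma qform_add_right (x y z : Fin n → ℝ) :
    qform G x (fun i => y i + z i) = qform G x y + qform G x z := by
  unfold qform
  rw [← Finset.sum_add_distrib]
  refine Finset.sum_congr rfl fun i _ => ?_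
  rw [← Finset.sum_add_distrib]
  refine Finset.sum_congr rfl fun j _ => ?_
  split <;> ring

private lemma qform_pair (x u : Fin n → ℝ) (a b : Fin n) (hab : a ≠ b)
    (hu : ∀ i, i ≠ a → i ≠ b → u i = 0) :
    qform G x u = (∑ i, if G.Adj i a then x i else 0) * u a
                + (∑ i, if G.Adj i b then x i else 0) * u b := by
  unfold qform
  rw [Finset.sum_comm]
  have h1 : ∀ j, (∑ i, if G.Adj i j then x i * u j else 0)
      = (∑ i, if G.Adj i j then x i else 0) * u j := by
    intro j
    rw [Finset.sum_mul]
    refine Finset.sum_congr rfl fun i _ => ?_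
    split <;> simp
  simp_rw [h1]
  rw [show (∑ j, (∑ i, if G.Adj i j then x i else 0) * u j)
      = ∑ j ∈ ({a, b} : Finset (Fin n)), (∑ i, if G.Adj i j then x i else 0) * u j from
    (Finset.sum_subset (Finset.subset_univ _) (by
      intro j _ hj
      simp only [Finset.mem_insert, Finset.mem_singleton, not_or] at hj
      rw [hu j hj.1 hj.2, mul_zero])).symm]
  rw [Finset.sum_pair hab]

private lemma qform_add_left (x y z : Fin n → ℝ) :
    qform G (fun i => x i + y i) z = qform G x z + qform G y z := by
  rw [qform_comm, qform_add_right, qform_comm G z x, qform_comm G z y]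

private lemma ms_step (C : ℝ) (d : Fin n → ℝ) (hd : ∀ i, 0 ≤ d i)
    (a b : Fin n) (hab : a ≠ b) (hnadj : ¬ G.Adj a b)
    (hc : (∑ i, if G.Adj i b then d i else 0) ≤ (∑ i, if G.Adj i a then d i else 0))
    (H : ∀ d' : Fin n → ℝ, (∀ i, 0 ≤ d' i) → d' b = 0 → (∀ i, i ≠ a → i ≠ b → d' i = d i) →
          (∑ i, d' i) = (∑ i, d i) → qform G d' d' ≤ C) :
    qform G d d ≤ C := by
  set u : Fin n → ℝ := fun i => if i = b then -(d b) else if i = a then d b else 0 with hu_def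
  have hu : ∀ i, i ≠ a → i ≠ b → u i = 0 := by
    intro i h1 h2; simp [hu_def, h1, h2]
  have hua : u a = d b := by simp [hu_def, hab]
  have hub : u b = -(d b) := by simp [hu_def]
  set d' : Fin n → ℝ := fun i => d i + u i with hd'_def
  have hd'b : d' b = 0 := by simp [hd'_def, hub]
  have hd'a : d' a = d a + d b := by simp [hd'_def, hua]
  have hagree : ∀ i, i ≠ a → i ≠ b → d' i = d i := by
    intro i h1 h2; simp [hd'_def, hu i h1 h2]
  have hd'0 : ∀ i, 0 ≤ d' i := by
    intro i
    by_cases h2 : i = b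
    · rw [h2, hd'b]
    · by_cases h1 : i = a
      · rw [h1, hd'a]; exact add_nonneg (hd a) (hd b)
      · rw [hagree i h1 h2]; exact hd i
  have hsum : (∑ i, d' i) = ∑ i, d i := by
    have : (∑ i, u i) = 0 := by
      rw [show (∑ i, u i) = ∑ i ∈ ({a, b} : Finset (Fin n)), u i from
        (Finset.sum_subset (Finset.subset_univ _) (by
          intro j _ hj
          simp only [Finset.mem_insert, Finset.mem_singleton, not_or] at hj
          exact hu j hj.1 hj.2)).symm]
      rw [Finset.sum_pair hab, hua, hub]; ring
    calc (∑ i, d' i) = (∑ i, d i) + ∑ i, u i := by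
          rw [← Finset.sum_add_distrib]
      _ = ∑ i, d i := by rw [this, add_zero]
  have euu : qform G u u = 0 := by
    rw [qform_pair G u u a b hab hu]
    have ca : (∑ i, if G.Adj i a then u i else 0) = 0 := by
      apply Finset.sum_eq_zero
      intro i _
      by_cases h : G.Adj i a
      · rw [if_pos h]
        exact hu i (fun he => G.irrefl (he ▸ h)) (fun he => hnadj (G.adj_symm (he ▸ h)))
      · rw [if_neg h]
    have cb : (∑ i, if G.Adj i b then u i else 0) = 0 := by
      apply Finset.sum_eq_zero
      intro i _
      by_cases h : G.Adj i b
      · rw [if_pos h]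
        exact hu i (fun he => hnadj (he ▸ h)) (fun he => G.irrefl (he ▸ h))
      · rw [if_neg h]
    rw [ca, cb]; ring
  have edu : 0 ≤ qform G d u := by
    rw [qform_pair G d u a b hab hu, hua, hub]
    have := mul_nonneg (sub_nonneg.2 hc) (hd b)
    nlinarith [this]
  have expand : qform G d' d' = qform G d d + 2 * qform G d u + qform G u u := by
    have e1 : qform G d' d' = qform G d d' + qform G u d' := qform_add_left G d u d'
    have e2 : qform G d d' = qform G d d + qform G d u := qform_add_right G d d u
    have e3 : qform G u d' = qform G u d + qform G u u := qform_add_right G u d u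
    have e4 : qform G u d = qform G d u := qform_comm G u d
    rw [e1, e2, e3, e4]; ring
  have key : qform G d d ≤ qform G d' d' := by
    rw [expand, euu]; linarith
  exact le_trans key (H d' hd'0 hd'b hagree hsum)

private lemma motzkin_straus (hω : 0 < G.cliqueNum) :
    ∀ N : ℕ, ∀ s : Finset (Fin n), s.card ≤ N → ∀ d : Fin n → ℝ,
      (∀ i, 0 ≤ d i) → (∀ i ∉ s, d i = 0) →
      qform G d d ≤ (1 - 1 / (G.cliqueNum : ℝ)) * (∑ i, d i) ^ 2 := by
  have hω' : (0 : ℝ) < G.cliqueNum := by exact_mod_cast hω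
  intro N
  induction N with
  | zero =>
    intro s hcard d hd hsupp
    have hs : s = ∅ := Finset.card_eq_zero.1 (Nat.le_zero.1 hcard)
    have hd0 : ∀ i, d i = 0 := fun i => hsupp i (by simp [hs])
    simp [qform, hd0]
  | succ N ihN =>
    intro s hcard d hd hsupp
    by_cases hcl : G.IsClique (s : Set (Fin n))
    · -- clique case
      have hcardω : s.card ≤ G.cliqueNum :=
        SimpleGraph.IsClique.card_le_cliqueNum (tc := hcl)
      set T : ℝ := ∑ i, d i with hT
      have h1 : qform G d d ≤ T ^ 2 - ∑ i, (d i) ^ 2 := by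
        have step : qform G d d ≤ ∑ i, ∑ j, (if i ≠ j then d i * d j else 0) := by
          unfold qform
          refine Finset.sum_le_sum fun i _ => Finset.sum_le_sum fun j _ => ?_
          by_cases h : G.Adj i j
          · rw [if_pos h, if_pos (G.ne_of_adj h)]
          · rw [if_neg h]
            split
            · exact mul_nonneg (hd i) (hd j)
            · exact le_refl 0
        have inner : ∀ i, (∑ j, if i ≠ j then d i * d j else 0) = d i * T - d i * d i := by
          intro i
          have e : (∑ j, if i ≠ j then d i * d j else 0)
              = (∑ j, d i * d j) - ∑ j, (if i = j then d i * d j else 0) := by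
            rw [← Finset.sum_sub_distrib]
            refine Finset.sum_congr rfl fun j _ => ?_
            by_cases h : i = j
            · rw [if_neg (not_not_intro h), if_pos h]; ring
            · rw [if_pos h, if_neg h]; ring
          rw [e, ← Finset.mul_sum, Finset.sum_ite_eq]
          simp [hT]
        have eq2 : (∑ i, ∑ j, (if i ≠ j then d i * d j else 0)) = T ^ 2 - ∑ i, (d i) ^ 2 := by
          simp_rw [inner]
          rw [Finset.sum_sub_distrib, ← Finset.sum_mul, ← hT,
            show (∑ i, d i * d i) = ∑ i, (d i)^2 from
              Finset.sum_congr rfl fun i _ => by ring]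
          ring
        rw [← eq2]; exact step
      have h2 : T ^ 2 ≤ (G.cliqueNum : ℝ) * ∑ i, (d i) ^ 2 := by
        have hTs : T = ∑ i ∈ s, d i :=
          (Finset.sum_subset (Finset.subset_univ s) (fun i _ hi => hsupp i hi)).symm
        have hQ : (∑ i ∈ s, (d i) ^ 2) ≤ ∑ i, (d i) ^ 2 :=
          Finset.sum_le_sum_of_subset_of_nonneg (Finset.subset_univ s)
            (fun i _ _ => sq_nonneg _)
        have cauchy : (∑ i ∈ s, d i) ^ 2 ≤ (s.card : ℝ) * ∑ i ∈ s, (d i) ^ 2 := by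
          exact_mod_cast sq_sum_le_card_mul_sum_sq (s := s) (f := d)
        have hcard' : (s.card : ℝ) ≤ (G.cliqueNum : ℝ) := by exact_mod_cast hcardω
        have hs2 : (0:ℝ) ≤ ∑ i ∈ s, (d i) ^ 2 := Finset.sum_nonneg fun i _ => sq_nonneg _
        calc T ^ 2 = (∑ i ∈ s, d i) ^ 2 := by rw [hTs]
          _ ≤ (s.card : ℝ) * ∑ i ∈ s, (d i) ^ 2 := cauchy
          _ ≤ (G.cliqueNum : ℝ) * ∑ i ∈ s, (d i) ^ 2 := by
              exact mul_le_mul_of_nonneg_right hcard' hs2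
          _ ≤ (G.cliqueNum : ℝ) * ∑ i, (d i) ^ 2 := by
              exact mul_le_mul_of_nonneg_left hQ (le_of_lt hω')
      have h3 : T ^ 2 / (G.cliqueNum : ℝ) ≤ ∑ i, (d i) ^ 2 := by
        rw [div_le_iff₀ hω']
        linarith [h2]
      have : (1 - 1 / (G.cliqueNum : ℝ)) * T ^ 2 = T ^ 2 - T ^ 2 / (G.cliqueNum : ℝ) := by
        ring
      rw [this]
      linarith
    · -- non-clique case
      rw [SimpleGraph.isClique_iff, Set.Pairwise] at hcl
      push_neg at hcl
      obtain ⟨a, ha, b, hb, hab, hnadj⟩ := hcl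
      rw [Finset.mem_coe] at ha hb
      have hcard' : ∀ c, c ∈ s → (s.erase c).card ≤ N := by
        intro c hc
        rw [Finset.card_erase_of_mem hc]
        omega
      have mk : ∀ (a' b' : Fin n), a' ∈ s → b' ∈ s → a' ≠ b' → ¬ G.Adj a' b' →
          (∑ i, if G.Adj i b' then d i else 0) ≤ (∑ i, if G.Adj i a' then d i else 0) →
          qform G d d ≤ (1 - 1 / (G.cliqueNum : ℝ)) * (∑ i, d i) ^ 2 := by
        intro a' b' ha' hb' hab' hnadj' hc'
        refine ms_step G _ d hd a' b' hab' hnadj' hc' ?_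
        intro d' hd'0 hd'b hagree hsum
        rw [← hsum]
        refine ihN (s.erase b') (hcard' b' hb') d' hd'0 ?_
        intro i hi
        by_cases h2 : i = b'
        · rw [h2]; exact hd'b
        · have hins : i ∉ s := fun h => hi (Finset.mem_erase.2 ⟨h2, h⟩)
          by_cases h1 : i = a'
          · exact absurd (h1 ▸ ha') hins
          · rw [hagree i h1 h2]; exact hsupp i hins
      rcases le_total (∑ i, if G.Adj i b then d i else 0) (∑ i, if G.Adj i a then d i else 0)
        with hc | hc
      · exact mk a b ha hb hab hnadj hc
      · exact mk b a hb ha hab.symm (fun h => hnadj h.symm) hc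


private lemma char_sum (m : ℕ) (hm : 0 < m) (s : ℤ) (hs : s ≠ 0) (hsm : |s| < (m : ℤ)) :
    (∑ t : Fin m, Complex.exp (2 * (Real.pi : ℂ) * Complex.I * (s : ℂ) * ((t : ℕ) : ℂ) / m))
      = 0 := by
  have hm' : ((m : ℂ)) ≠ 0 := Nat.cast_ne_zero.2 hm.ne'
  have hπ : ((Real.pi : ℂ)) ≠ 0 := Complex.ofReal_ne_zero.2 Real.pi_ne_zero
  set r : ℂ := Complex.exp (2 * (Real.pi : ℂ) * Complex.I * (s : ℂ) / m) with hr
  have hterm : ∀ t : Fin m,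
      Complex.exp (2 * (Real.pi : ℂ) * Complex.I * (s : ℂ) * ((t : ℕ) : ℂ) / m)
        = r ^ (t : ℕ) := by
    intro t
    rw [hr, ← Complex.exp_nat_mul]
    congr 1
    ring
  have hr1 : r ≠ 1 := by
    intro h
    rw [hr, Complex.exp_eq_one_iff] at h
    obtain ⟨j, hj⟩ := h
    have hne : (2 * (Real.pi : ℂ) * Complex.I) ≠ 0 :=
      mul_ne_zero (mul_ne_zero two_ne_zero hπ) Complex.I_ne_zero
    rw [div_eq_iff hm'] at hj
    have h2 : (s : ℂ) = (j : ℂ) * m := by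
      apply mul_left_cancel₀ hne
      linear_combination hj
    have h3 : s = j * (m : ℤ) := by exact_mod_cast h2
    have hj0 : j ≠ 0 := by
      intro h; rw [h] at h3; simp at h3; exact hs h3
    have : (m : ℤ) ≤ |s| := by
      rw [h3, abs_mul, abs_of_nonneg (by positivity : (0:ℤ) ≤ (m:ℤ))]
      calc (m : ℤ) = 1 * m := (one_mul _).symm
        _ ≤ |j| * m := by
            have : (1 : ℤ) ≤ |j| := Int.one_le_abs (by exact_mod_cast hj0)
            exact mul_le_mul_of_nonneg_right this (by positivity)
    omega
  have hrm : r ^ m = 1 := by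
    rw [hr, ← Complex.exp_nat_mul]
    rw [show ((m : ℂ) * (2 * (Real.pi : ℂ) * Complex.I * (s : ℂ) / m))
        = (s : ℂ) * (2 * (Real.pi : ℂ) * Complex.I) by field_simp]
    exact Complex.exp_int_mul_two_pi_mul_I s
  calc (∑ t : Fin m, Complex.exp (2 * (Real.pi : ℂ) * Complex.I * (s : ℂ) * ((t : ℕ) : ℂ) / m))
      = ∑ t : Fin m, r ^ (t : ℕ) := Finset.sum_congr rfl fun t _ => hterm t
    _ = ∑ i ∈ Finset.range m, r ^ i := Fin.sum_univ_eq_sum_range _ m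
    _ = (r ^ m - 1) / (r - 1) := geom_sum_eq hr1 m
    _ = 0 := by rw [hrm]; simp

private noncomputable def Qmat (m k : ℕ) : Matrix (Fin m) (Fin m) ℂ :=
  fun x y => (m : ℂ)⁻¹ * ∑ a : Fin k,
    Complex.exp ((Real.pi : ℂ) * Complex.I * (2 * ((a : ℕ) : ℂ) - ((k : ℂ) - 1))
      * (((x : ℕ) : ℂ) - ((y : ℕ) : ℂ)) / m)

private lemma Qmat_diag (m k : ℕ) (x : Fin m) : Qmat m k x x = (k : ℂ) / m := by
  unfold Qmat
  simp [sub_self, div_eq_inv_mul]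

private lemma conj_exp_form (c : ℝ) (w z : ℂ) (hw : (starRingEnd ℂ) w = w)
    (hz : (starRingEnd ℂ) z = z) (mm : ℕ) :
    (starRingEnd ℂ) (Complex.exp ((c : ℂ) * Complex.I * w * z / mm))
      = Complex.exp (-((c : ℂ) * Complex.I * w * z / mm)) := by
  rw [← Complex.exp_conj]
  congr 1
  rw [map_div₀, _root_.map_mul, _root_.map_mul, _root_.map_mul, Complex.conj_ofReal,
    Complex.conj_I, hw, hz, Complex.conj_natCast]
  ring

private lemma conj_w (k : ℕ) (a : Fin k) :
    (starRingEnd ℂ) (2 * ((a : ℕ) : ℂ) - ((k : ℂ) - 1)) = 2 * ((a : ℕ) : ℂ) - ((k : ℂ) - 1) := by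
  rw [map_sub, _root_.map_mul, map_sub, map_ofNat, _root_.map_one, Complex.conj_natCast,
    Complex.conj_natCast]

private lemma conj_z (m : ℕ) (x y : Fin m) :
    (starRingEnd ℂ) (((x : ℕ) : ℂ) - ((y : ℕ) : ℂ)) = ((x : ℕ) : ℂ) - ((y : ℕ) : ℂ) := by
  rw [map_sub, Complex.conj_natCast, Complex.conj_natCast]

private lemma Qmat_herm (m k : ℕ) (x y : Fin m) :
    Qmat m k y x = (starRingEnd ℂ) (Qmat m k x y) := by
  unfold Qmat
  rw [_root_.map_mul, map_sum, map_inv₀, Complex.conj_natCast]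
  congr 1
  refine Finset.sum_congr rfl fun a _ => ?_
  rw [conj_exp_form Real.pi _ _ (conj_w k a) (conj_z m x y) m]
  congr 1
  ring

private lemma Qmat_selfconj (m k : ℕ) (x y : Fin m) :
    (starRingEnd ℂ) (Qmat m k x y) = Qmat m k x y := by
  unfold Qmat
  rw [_root_.map_mul, map_sum, map_inv₀, Complex.conj_natCast]
  congr 1
  have step : ∀ a : Fin k,
      (starRingEnd ℂ) (Complex.exp ((Real.pi : ℂ) * Complex.I
          * (2 * ((a : ℕ) : ℂ) - ((k : ℂ) - 1)) * (((x : ℕ) : ℂ) - ((y : ℕ) : ℂ)) / m))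
      = Complex.exp ((Real.pi : ℂ) * Complex.I
          * (2 * (((Fin.rev a : Fin k) : ℕ) : ℂ) - ((k : ℂ) - 1))
          * (((x : ℕ) : ℂ) - ((y : ℕ) : ℂ)) / m) := by
    intro a
    have hk1 : ((a : ℕ) + 1 : ℕ) ≤ k := a.isLt
    have hrev : ((((Fin.rev a : Fin k) : ℕ)) : ℂ) = (k : ℂ) - ((a : ℕ) : ℂ) - 1 := by
      rw [Fin.val_rev, Nat.cast_sub hk1]
      push_cast
      ring
    rw [conj_exp_form Real.pi _ _ (conj_w k a) (conj_z m x y) m]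
    congr 1
    rw [hrev]
    ring
  simp only [step]
  exact Fintype.sum_bijective Fin.rev Fin.rev_bijective
    (fun a : Fin k => Complex.exp ((Real.pi : ℂ) * Complex.I
      * (2 * (((Fin.rev a : Fin k) : ℕ) : ℂ) - ((k : ℂ) - 1))
      * (((x : ℕ) : ℂ) - ((y : ℕ) : ℂ)) / m))
    (fun a : Fin k => Complex.exp ((Real.pi : ℂ) * Complex.I
      * (2 * ((a : ℕ) : ℂ) - ((k : ℂ) - 1))
      * (((x : ℕ) : ℂ) - ((y : ℕ) : ℂ)) / m))
    (fun a => rfl)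

private lemma Qmat_mul (m k : ℕ) (hk : 0 < k) (hkm : k ≤ m) :
    Qmat m k * Qmat m k = Qmat m k := by
  have hm : 0 < m := lt_of_lt_of_le hk hkm
  have hm' : ((m : ℂ)) ≠ 0 := Nat.cast_ne_zero.2 hm.ne'
  ext x y
  rw [Matrix.mul_apply]
  simp only [Qmat]
  have key : ∀ a b : Fin k,
      (∑ t : Fin m, Complex.exp (2 * (Real.pi : ℂ) * Complex.I
          * (((b : ℕ) : ℂ) - ((a : ℕ) : ℂ)) * ((t : ℕ) : ℂ) / m))
        = if a = b then (m : ℂ) else 0 := by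
    intro a b
    by_cases hab : a = b
    · subst hab
      simp
    · rw [if_neg hab]
      have hne : ((a : ℕ) : ℤ) ≠ ((b : ℕ) : ℤ) := by
        exact_mod_cast fun h => hab (Fin.ext h)
      have ha' : ((a : ℕ) : ℤ) < m := by exact_mod_cast lt_of_lt_of_le a.isLt hkm
      have hb' : ((b : ℕ) : ℤ) < m := by exact_mod_cast lt_of_lt_of_le b.isLt hkm
      have ha0 : (0 : ℤ) ≤ ((a : ℕ) : ℤ) := by positivity
      have hb0 : (0 : ℤ) ≤ ((b : ℕ) : ℤ) := by positivity
      have hcast : (((b : ℕ) : ℂ) - ((a : ℕ) : ℂ))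
          = (((((b : ℕ) : ℤ) - ((a : ℕ) : ℤ)) : ℤ) : ℂ) := by push_cast; ring
      simp_rw [hcast]
      exact char_sum m hm (((b : ℕ) : ℤ) - ((a : ℕ) : ℤ)) (by omega)
        (abs_lt.2 ⟨by omega, by omega⟩)
  have prod_eq : ∀ (a b : Fin k) (t : Fin m),
      Complex.exp ((Real.pi : ℂ) * Complex.I * (2 * ((a : ℕ) : ℂ) - ((k : ℂ) - 1))
          * (((x : ℕ) : ℂ) - ((t : ℕ) : ℂ)) / m)
        * Complex.exp ((Real.pi : ℂ) * Complex.I * (2 * ((b : ℕ) : ℂ) - ((k : ℂ) - 1))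
          * (((t : ℕ) : ℂ) - ((y : ℕ) : ℂ)) / m)
      = Complex.exp ((Real.pi : ℂ) * Complex.I
          * ((2 * ((a : ℕ) : ℂ) - ((k : ℂ) - 1)) * ((x : ℕ) : ℂ)
            - (2 * ((b : ℕ) : ℂ) - ((k : ℂ) - 1)) * ((y : ℕ) : ℂ)) / m)
        * Complex.exp (2 * (Real.pi : ℂ) * Complex.I
          * (((b : ℕ) : ℂ) - ((a : ℕ) : ℂ)) * ((t : ℕ) : ℂ) / m) := by
    intro a b t
    rw [← Complex.exp_add, ← Complex.exp_add]
    congr 1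
    ring
  simp_rw [mul_mul_mul_comm]
  rw [← Finset.mul_sum]
  have swap : (∑ t : Fin m, ∑ a : Fin k, ∑ b : Fin k,
      Complex.exp ((Real.pi : ℂ) * Complex.I
          * ((2 * ((a : ℕ) : ℂ) - ((k : ℂ) - 1)) * ((x : ℕ) : ℂ)
            - (2 * ((b : ℕ) : ℂ) - ((k : ℂ) - 1)) * ((y : ℕ) : ℂ)) / m)
        * Complex.exp (2 * (Real.pi : ℂ) * Complex.I
          * (((b : ℕ) : ℂ) - ((a : ℕ) : ℂ)) * ((t : ℕ) : ℂ) / m))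
      = ∑ a : Fin k, ∑ b : Fin k, ∑ t : Fin m,
      Complex.exp ((Real.pi : ℂ) * Complex.I
          * ((2 * ((a : ℕ) : ℂ) - ((k : ℂ) - 1)) * ((x : ℕ) : ℂ)
            - (2 * ((b : ℕ) : ℂ) - ((k : ℂ) - 1)) * ((y : ℕ) : ℂ)) / m)
        * Complex.exp (2 * (Real.pi : ℂ) * Complex.I
          * (((b : ℕ) : ℂ) - ((a : ℕ) : ℂ)) * ((t : ℕ) : ℂ) / m) := by
    rw [Finset.sum_comm]
    exact Finset.sum_congr rfl fun a _ => Finset.sum_comm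
  rw [show (∑ t : Fin m, (∑ a : Fin k, Complex.exp ((Real.pi : ℂ) * Complex.I * (2 * ((a : ℕ) : ℂ) - ((k : ℂ) - 1)) * (((x : ℕ) : ℂ) - ((t : ℕ) : ℂ)) / m)) * ∑ b : Fin k, Complex.exp ((Real.pi : ℂ) * Complex.I * (2 * ((b : ℕ) : ℂ) - ((k : ℂ) - 1)) * (((t : ℕ) : ℂ) - ((y : ℕ) : ℂ)) / m)) = ∑ t : Fin m, ∑ a : Fin k, ∑ b : Fin k,
      Complex.exp ((Real.pi : ℂ) * Complex.I
          * ((2 * ((a : ℕ) : ℂ) - ((k : ℂ) - 1)) * ((x : ℕ) : ℂ)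
            - (2 * ((b : ℕ) : ℂ) - ((k : ℂ) - 1)) * ((y : ℕ) : ℂ)) / m)
        * Complex.exp (2 * (Real.pi : ℂ) * Complex.I
          * (((b : ℕ) : ℂ) - ((a : ℕ) : ℂ)) * ((t : ℕ) : ℂ) / m) from
    Finset.sum_congr rfl fun t _ => by rw [Finset.sum_mul_sum]; exact Finset.sum_congr rfl fun a _ => Finset.sum_congr rfl fun b _ => prod_eq a b t]
  rw [swap]
  simp_rw [← Finset.mul_sum, key, mul_ite, mul_zero, Finset.sum_ite_eq, Finset.mem_univ, if_true]
  have final : ∀ a : Fin k,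
      Complex.exp ((Real.pi : ℂ) * Complex.I
          * ((2 * ((a : ℕ) : ℂ) - ((k : ℂ) - 1)) * ((x : ℕ) : ℂ)
            - (2 * ((a : ℕ) : ℂ) - ((k : ℂ) - 1)) * ((y : ℕ) : ℂ)) / m) * (m : ℂ)
      = (m : ℂ) * Complex.exp ((Real.pi : ℂ) * Complex.I
          * (2 * ((a : ℕ) : ℂ) - ((k : ℂ) - 1)) * (((x : ℕ) : ℂ) - ((y : ℕ) : ℂ)) / m) := by
    intro a
    rw [show Complex.exp ((Real.pi : ℂ) * Complex.I
          * ((2 * ((a : ℕ) : ℂ) - ((k : ℂ) - 1)) * ((x : ℕ) : ℂ)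
            - (2 * ((a : ℕ) : ℂ) - ((k : ℂ) - 1)) * ((y : ℕ) : ℂ)) / m)
        = Complex.exp ((Real.pi : ℂ) * Complex.I
          * (2 * ((a : ℕ) : ℂ) - ((k : ℂ) - 1)) * (((x : ℕ) : ℂ) - ((y : ℕ) : ℂ)) / m) from
      by congr 1; ring]
    ring
  simp_rw [final]
  rw [← Finset.mul_sum]
  rw [mul_assoc, ← mul_assoc _ (m : ℂ), inv_mul_cancel₀ hm', one_mul]

private lemma Qmat_im (m k : ℕ) (x y : Fin m) : (Qmat m k x y).im = 0 :=
  Complex.conj_eq_iff_im.1 (Qmat_selfconj m k x y)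

private lemma re_mul_re (z w : ℂ) (hz : z.im = 0) (hw : w.im = 0) :
    z.re * w.re = (z * w).re := by
  rw [Complex.mul_re, hz, hw]
  ring

private lemma sum_dite_mem {n' : ℕ} (S : Finset (Fin n')) (f : {x // x ∈ S} → ℝ) :
    (∑ t : Fin n', if ht : t ∈ S then f ⟨t, ht⟩ else 0) = ∑ u : {x // x ∈ S}, f u := by
  rw [show (∑ t : Fin n', if ht : t ∈ S then f ⟨t, ht⟩ else 0)
      = ∑ t ∈ S, (if ht : t ∈ S then f ⟨t, ht⟩ else 0) from
    (Finset.sum_subset (Finset.subset_univ S) (by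
      intro t _ ht; rw [dif_neg ht])).symm]
  rw [← Finset.sum_attach S (fun t => if ht : t ∈ S then f ⟨t, ht⟩ else 0)]
  rw [Finset.univ_eq_attach]
  refine Finset.sum_congr rfl fun u _ => ?_
  rw [dif_pos u.2]

set_option maxHeartbeats 2000000 in
private lemma exists_P (n k : ℕ) (hk : 0 < k) (G : SimpleGraph (Fin n)) [DecidableRel G.Adj]
    (hω : k ≤ G.cliqueNum) :
    ∃ P ∈ Grassmannian k n,
      ((k : ℝ) ^ 2 * (1 - 1 / (G.cliqueNum : ℝ)))
        = ∑ i, ∑ j, if G.Adj i j then P i i * P j j else 0 := by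
  obtain ⟨S, hS⟩ := G.exists_isNClique_cliqueNum
  have hclique : G.IsClique (S : Set (Fin n)) := hS.isClique
  set m : ℕ := S.card with hm_def
  have hcardω : m = G.cliqueNum := hS.card_eq
  have hkm : k ≤ m := hcardω ▸ hω
  have hm : 0 < m := lt_of_lt_of_le hk hkm
  have hmR : ((m : ℝ)) ≠ 0 := Nat.cast_ne_zero.2 hm.ne'
  set e : {x // x ∈ S} ≃ Fin m := S.equivFin with he_def
  set Q : Matrix (Fin m) (Fin m) ℂ := Qmat m k with hQ_def
  set P : Matrix (Fin n) (Fin n) ℝ := fun i j =>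
    if hi : i ∈ S then if hj : j ∈ S then (Q (e ⟨i, hi⟩) (e ⟨j, hj⟩)).re else 0 else 0
    with hP_def
  have hPdiag : ∀ i, P i i = if i ∈ S then (k : ℝ) / m else 0 := by
    intro i
    by_cases hi : i ∈ S
    · rw [if_pos hi]
      have : P i i = (Q (e ⟨i, hi⟩) (e ⟨i, hi⟩)).re := by simp only [hP_def]; rw [dif_pos hi, dif_pos hi]
      rw [this, hQ_def, Qmat_diag]
      rw [show ((k : ℂ) / m) = (((k : ℝ) / m : ℝ) : ℂ) by push_cast; ring]
      exact Complex.ofReal_re _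
    · rw [if_neg hi]
      simp only [hP_def]
      rw [dif_neg hi]
  have hsym : Pᵀ = P := by
    ext i j
    rw [Matrix.transpose_apply]
    by_cases hi : i ∈ S <;> by_cases hj : j ∈ S
    · simp only [hP_def]
      simp only [dif_pos hi, dif_pos hj]
      rw [hQ_def, Qmat_herm m k (e ⟨i, hi⟩) (e ⟨j, hj⟩), Complex.conj_re]
    · simp only [hP_def]; simp only [dif_pos hi, dif_neg hj]
    · simp only [hP_def]; simp only [dif_pos hj, dif_neg hi]
    · simp only [hP_def]; simp only [dif_neg hi, dif_neg hj]
  have hidem : P * P = P := by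
    ext i j
    rw [Matrix.mul_apply]
    by_cases hi : i ∈ S
    · by_cases hj : j ∈ S
      · have hterm : ∀ t, P i t * P t j = if ht : t ∈ S then
            (Q (e ⟨i, hi⟩) (e ⟨t, ht⟩) * Q (e ⟨t, ht⟩) (e ⟨j, hj⟩)).re else 0 := by
          intro t
          by_cases ht : t ∈ S
          · rw [dif_pos ht]
            have h1 : P i t = (Q (e ⟨i, hi⟩) (e ⟨t, ht⟩)).re := by
              simp only [hP_def]; rw [dif_pos hi, dif_pos ht]
            have h2 : P t j = (Q (e ⟨t, ht⟩) (e ⟨j, hj⟩)).re := by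
              simp only [hP_def]; rw [dif_pos ht, dif_pos hj]
            rw [h1, h2]
            exact re_mul_re _ _ (hQ_def ▸ Qmat_im m k _ _) (hQ_def ▸ Qmat_im m k _ _)
          · rw [dif_neg ht]
            have h1 : P i t = 0 := by simp only [hP_def]; rw [dif_pos hi, dif_neg ht]
            rw [h1, zero_mul]
        rw [Finset.sum_congr rfl fun t _ => hterm t]
        rw [sum_dite_mem S (fun u => (Q (e ⟨i, hi⟩) (e u) * Q (e u) (e ⟨j, hj⟩)).re)]
        rw [Fintype.sum_equiv e _ (fun v => (Q (e ⟨i, hi⟩) v * Q v (e ⟨j, hj⟩)).re)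
          (fun u => rfl)]
        rw [← Complex.re_sum]
        rw [show (∑ v : Fin m, Q (e ⟨i, hi⟩) v * Q v (e ⟨j, hj⟩))
            = (Q * Q) (e ⟨i, hi⟩) (e ⟨j, hj⟩) from (Matrix.mul_apply).symm]
        rw [hQ_def, Qmat_mul m k hk hkm]
        simp only [hP_def]; rw [dif_pos hi, dif_pos hj]
      · have hz : P i j = 0 := by simp only [hP_def]; rw [dif_pos hi, dif_neg hj]
        rw [hz]
        apply Finset.sum_eq_zero
        intro t _
        have : P t j = 0 := by
          simp only [hP_def]
          by_cases ht : t ∈ S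
          · rw [dif_pos ht, dif_neg hj]
          · rw [dif_neg ht]
        rw [this, mul_zero]
    · have hz : P i j = 0 := by simp only [hP_def]; rw [dif_neg hi]
      rw [hz]
      apply Finset.sum_eq_zero
      intro t _
      have : P i t = 0 := by simp only [hP_def]; rw [dif_neg hi]
      rw [this, zero_mul]
  have htr : P.trace = (k : ℝ) := by
    rw [Matrix.trace]
    unfold Matrix.diag
    rw [Finset.sum_congr rfl fun i _ => hPdiag i]
    rw [Finset.sum_ite_mem, Finset.univ_inter, Finset.sum_const, ← hm_def]
    rw [nsmul_eq_mul]
    field_simp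
  refine ⟨P, ⟨hsym, hidem, htr⟩, ?_⟩
  have hval : (∑ i, ∑ j, if G.Adj i j then P i i * P j j else 0)
      = (m : ℝ) * ((m : ℝ) - 1) * ((k : ℝ) / m) ^ 2 := by
    have houter : ∀ i, (∑ j, if G.Adj i j then P i i * P j j else 0)
        = if i ∈ S then (∑ j ∈ S, if G.Adj i j then ((k:ℝ)/m) * ((k:ℝ)/m) else 0) else 0 := by
      intro i
      by_cases hi : i ∈ S
      · rw [if_pos hi]
        rw [show (∑ j, if G.Adj i j then P i i * P j j else 0)
            = ∑ j ∈ S, (if G.Adj i j then P i i * P j j else 0) from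
          (Finset.sum_subset (Finset.subset_univ S) (by
            intro j _ hj
            have : P j j = 0 := by rw [hPdiag j, if_neg hj]
            rw [this, mul_zero, ite_self])).symm]
        refine Finset.sum_congr rfl fun j hj => ?_
        rw [hPdiag i, hPdiag j, if_pos hi, if_pos hj]
      · rw [if_neg hi]
        apply Finset.sum_eq_zero
        intro j _
        rw [hPdiag i, if_neg hi, zero_mul, ite_self]
    rw [Finset.sum_congr rfl fun i _ => houter i]
    rw [Finset.sum_ite_mem, Finset.univ_inter]
    have hinner : ∀ i ∈ S, (∑ j ∈ S, if G.Adj i j then ((k:ℝ)/m) * ((k:ℝ)/m) else 0)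
        = ((m : ℝ) - 1) * ((k : ℝ) / m) ^ 2 := by
      intro i hi
      have hadj : ∀ j ∈ S, (if G.Adj i j then ((k:ℝ)/m) * ((k:ℝ)/m) else 0)
          = (if i = j then 0 else ((k:ℝ)/m) * ((k:ℝ)/m)) := by
        intro j hj
        by_cases hij : i = j
        · rw [if_neg (hij ▸ G.irrefl : ¬ G.Adj i j), if_pos hij]
        · rw [if_pos (hclique hi hj hij), if_neg hij]
      rw [Finset.sum_congr rfl hadj]
      rw [show (∑ j ∈ S, if i = j then 0 else ((k:ℝ)/m) * ((k:ℝ)/m))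
          = ∑ j ∈ S, (((k:ℝ)/m) * ((k:ℝ)/m) - if i = j then ((k:ℝ)/m) * ((k:ℝ)/m) else 0) from
        Finset.sum_congr rfl fun j _ => by by_cases hij : i = j <;> simp [hij]]
      rw [Finset.sum_sub_distrib, Finset.sum_const, Finset.sum_ite_eq, if_pos hi, ← hm_def]
      rw [nsmul_eq_mul]
      ring
    rw [Finset.sum_congr rfl hinner, Finset.sum_const, ← hm_def, nsmul_eq_mul]
    ring
  rw [hval, ← hcardω]
  field_simp

theorem clique_number_as_grassmannian_QP (n k : ℕ) (hk : 0 < k) (hkn : k ≤ n)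
    (G : SimpleGraph (Fin n)) [DecidableRel G.Adj] (hω : k ≤ G.cliqueNum) :
    IsGreatest
      {v : ℝ | ∃ P ∈ Grassmannian k n,
        v = ∑ i, ∑ j, if G.Adj i j then P i i * P j j else 0}
      ((k : ℝ) ^ 2 * (1 - 1 / (G.cliqueNum : ℝ))) := by
  have hω0 : 0 < G.cliqueNum := lt_of_lt_of_le hk hω
  constructor
  · exact exists_P n k hk G hω
  · rintro v ⟨P, ⟨hsym, hidem, htr⟩, rfl⟩
    have hs : ∀ a b : Fin n, P a b = P b a := by
      intro a b
      conv_rhs => rw [← hsym]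
      rw [Matrix.transpose_apply]
    have hd : ∀ i, 0 ≤ P i i := by
      intro i
      have h1 : (P * P) i i = P i i := by rw [hidem]
      rw [Matrix.mul_apply] at h1
      rw [← h1]
      rw [show (∑ j, P i j * P j i) = ∑ j, (P i j) ^ 2 from
        Finset.sum_congr rfl fun j _ => by rw [hs j i]; ring]
      positivity
    have hsum : (∑ i, P i i) = (k : ℝ) := by
      simpa [Matrix.trace, Matrix.diag] using htr
    have hMS := motzkin_straus G hω0 (Finset.univ.card) Finset.univ le_rfl
      (fun i => P i i) hd (fun i hi => absurd (Finset.mem_univ i) hi)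
    rw [hsum] at hMS
    calc (∑ i, ∑ j, if G.Adj i j then P i i * P j j else 0)
        = qform G (fun i => P i i) (fun i => P i i) := rfl
      _ ≤ (1 - 1 / (G.cliqueNum : ℝ)) * (k : ℝ) ^ 2 := hMS
      _ = (k : ℝ) ^ 2 * (1 - 1 / (G.cliqueNum : ℝ)) := by ring
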